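/- If a group G is torsion-free and every element of G admits an n-th root for every n ≥ 2, and G contains an element g of infinite order together with a choice of iterated roots s₁ = g, sₙⁿ = sₙ₋₁, then G contains a subgroup isomorphic to ℚ. -/

import Mathlib

/-- A predicate on a monoid saying that only `1` is of finite order (the Mathlib definition
`Monoid.IsTorsionFree`, since removed from Mathlib, restated verbatim). -/
def Monoid.IsTorsionFree (G : Type*) [Monoid G] :=
  ∀ g : G, g ≠ 1 → ¬IsOfFinOrder g

namespace TFDivAux

variable {G : Type*} [Group G]

/-- Iterated roots: `t 0 = g`, `t (n+1) ^ (n+1) = t n`. -/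
noncomputable def t (hroots : ∀ g : G, ∀ n : ℕ, 2 ≤ n → ∃ f : G, f ^ n = g) (g : G) : ℕ → G
  | 0 => g
  | (n + 1) =>
    if h : 2 ≤ n + 1 then Classical.choose (hroots (t hroots g n) (n + 1) h) else t hroots g n

variable (hroots : ∀ g : G, ∀ n : ℕ, 2 ≤ n → ∃ f : G, f ^ n = g) (g : G)

theorem t_step (n : ℕ) : t hroots g (n + 1) ^ (n + 1) = t hroots g n := by
  cases n with
  | zero => simp [t]
  | succ m =>
    rw [t]
    have h : 2 ≤ m + 1 + 1 := by omega
    rw [dif_pos h]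
    exact Classical.choose_spec (hroots (t hroots g (m + 1)) (m + 2) h)

theorem t_inf (hg : ¬ IsOfFinOrder g) (n : ℕ) : ¬ IsOfFinOrder (t hroots g n) := by
  induction n with
  | zero => exact hg
  | succ m ih =>
    intro hfin
    exact ih (t_step hroots g m ▸ hfin.pow)

/-- The key coercion lemma: if `q.den ≤ m` then `q * m!` is the integer
`q.num * (m! / q.den)`. -/
theorem key (q : ℚ) (m : ℕ) (h : q.den ≤ m) :
    ((q.num * ((m.factorial / q.den : ℕ) : ℤ) : ℤ) : ℚ) = q * (m.factorial : ℚ) := by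
  have hd : q.den ∣ m.factorial := Nat.dvd_factorial q.pos h
  have hm : (m.factorial : ℚ) = (q.den : ℚ) * ((m.factorial / q.den : ℕ) : ℚ) := by
    rw [← Nat.cast_mul, Nat.mul_div_cancel' hd]
  rw [Int.cast_mul, Int.cast_natCast, hm, ← mul_assoc, Rat.mul_den_eq_num]

/-- The value map `ℚ → G`. -/
noncomputable def F (q : ℚ) : G :=
  t hroots g q.den ^ (q.num * ((q.den.factorial / q.den : ℕ) : ℤ))

theorem val_eq (q : ℚ) (m : ℕ) (h : q.den ≤ m) (k : ℤ)
    (hk : (k : ℚ) = q * (m.factorial : ℚ)) : t hroots g m ^ k = F hroots g q := by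
  induction m, h using Nat.le_induction generalizing k with
  | base =>
    have : k = q.num * ((q.den.factorial / q.den : ℕ) : ℤ) := by
      exact_mod_cast hk.trans (key q q.den le_rfl).symm
    rw [this, F]
  | succ m hm ih =>
    set k' : ℤ := q.num * ((m.factorial / q.den : ℕ) : ℤ) with hk'def
    have hk' : (k' : ℚ) = q * (m.factorial : ℚ) := key q m hm
    have hkk : k = (m + 1 : ℤ) * k' := by
      have : (k : ℚ) = ((m + 1 : ℤ) * k' : ℤ) := by
        rw [hk, Nat.factorial_succ]
        push_cast
        rw [hk']
        ring
      exact_mod_cast this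
    have hstep : t hroots g (m + 1) ^ ((m : ℤ) + 1) = t hroots g m := by
      have h2 : ((m : ℤ) + 1) = ((m + 1 : ℕ) : ℤ) := by push_cast; ring
      rw [h2, zpow_natCast, t_step]
    rw [hkk, zpow_mul, hstep]
    exact ih k' hk'

theorem F_add (a b : ℚ) : F hroots g (a + b) = F hroots g a * F hroots g b := by
  set m : ℕ := max (max a.den b.den) (a + b).den with hm
  have ha : a.den ≤ m := le_trans (le_max_left _ _) (le_max_left _ _)
  have hb : b.den ≤ m := le_trans (le_max_right _ _) (le_max_left _ _)
  have hab : (a + b).den ≤ m := le_max_right _ _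
  set ka : ℤ := a.num * ((m.factorial / a.den : ℕ) : ℤ)
  set kb : ℤ := b.num * ((m.factorial / b.den : ℕ) : ℤ)
  have hka : (ka : ℚ) = a * m.factorial := key a m ha
  have hkb : (kb : ℚ) = b * m.factorial := key b m hb
  have hsum : ((ka + kb : ℤ) : ℚ) = (a + b) * m.factorial := by
    push_cast
    rw [hka, hkb]; ring
  rw [← val_eq hroots g (a + b) m hab _ hsum, ← val_eq hroots g a m ha _ hka,
    ← val_eq hroots g b m hb _ hkb, zpow_add]

theorem F_inj (hg : ¬ IsOfFinOrder g) (q : ℚ) (h1 : F hroots g q = 1) : q = 0 := by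
  have hinj : Function.Injective fun n : ℤ => t hroots g q.den ^ n :=
    injective_zpow_iff_not_isOfFinOrder.mpr (t_inf hroots g hg q.den)
  have h0 : q.num * ((q.den.factorial / q.den : ℕ) : ℤ) = 0 := by
    apply hinj
    simpa [F] using h1
  have hc : ((q.den.factorial / q.den : ℕ) : ℤ) ≠ 0 := by
    have := Nat.div_pos (Nat.self_le_factorial q.den) q.pos
    exact_mod_cast this.ne'
  have : q.num = 0 := by
    rcases mul_eq_zero.mp h0 with h | h
    · exact h
    · exact absurd h hc
  exact Rat.num_eq_zero.mp this

end TFDivAux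

/-- A nontrivial torsion-free group in which every element has n-th roots for all n ≥ 2
contains a subgroup isomorphic to ℚ. -/
theorem torsionFree_divisible_contains_rat {G : Type*} [Group G]
    (htf : Monoid.IsTorsionFree G)
    (hroots : ∀ g : G, ∀ n : ℕ, 2 ≤ n → ∃ f : G, f ^ n = g)
    (g : G) (hg : ¬ IsOfFinOrder g) :
    ∃ H : Subgroup G, Nonempty (H ≃* Multiplicative ℚ) := by
  classical
  let φ : Multiplicative ℚ →* G :=
    MonoidHom.mk' (fun q => TFDivAux.F hroots g q.toAdd)
      (fun a b => TFDivAux.F_add hroots g a.toAdd b.toAdd)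
  have hinj : Function.Injective φ := by
    rw [injective_iff_map_eq_one]
    intro q hq
    exact TFDivAux.F_inj hroots g hg q.toAdd hq
  exact ⟨φ.range, ⟨(MonoidHom.ofInjective hinj).symm⟩⟩
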